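/- Let q be a prime power, h ≥ 1, K ≥ 1, and let v_1, …, v_N be nonzero vectors of F_{q^h}^K whose F_{q^h}-span is all of F_{q^h}^K. Let C = {(x·v_1, …, x·v_N) : x ∈ F_{q^h}^K} ⊆ F_{q^h}^N be the code having the v_i as columns of a generator matrix (x·v denotes the standard bilinear form). Then every nonzero codeword of C is q-outer minimal if and only if ⟨v_1⟩_{F_{q^h}} ∪ … ∪ ⟨v_N⟩_{F_{q^h}} is an F_q-vectorial strong blocking set in F_{q^h}^K. -/

import Mathlib

open Module

set_option linter.unusedSectionVars false

/-- If `f, g` are functionals with `ker f ⊆ ker g`, then `g` is a scalar multiple of `f`. -/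
lemma aux_funct_ker {k M : Type*} [Field k] [AddCommGroup M] [Module k M]
    (f g : M →ₗ[k] k) (hf : f ≠ 0) (h : ∀ m, f m = 0 → g m = 0) :
    ∃ l : k, g = l • f := by
  obtain ⟨u, hu⟩ : ∃ u, f u ≠ 0 := by
    by_contra h'; push_neg at h'; exact hf (LinearMap.ext fun m => h' m)
  refine ⟨g u / f u, LinearMap.ext fun m => ?_⟩
  have h1 : f (m - (f m / f u) • u) = 0 := by
    simp only [map_sub, map_smul, smul_eq_mul]
    field_simp
    ring
  have h2 := h _ h1
  simp only [map_sub, map_smul, smul_eq_mul, sub_eq_zero] at h2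
  simp only [LinearMap.smul_apply, smul_eq_mul]
  rw [h2]; field_simp

section T
variable {Fq FL : Type*} [Field Fq] [Field FL] [Algebra Fq FL] [FiniteDimensional Fq FL]
variable (T : FL →ₗ[Fq] Fq)

lemma aux_T_zero (hT : T ≠ 0) (a : FL) (h : ∀ t, T (a * t) = 0) : a = 0 := by
  by_contra ha
  apply hT
  ext s
  have := h (a⁻¹ * s)
  rwa [← mul_assoc, mul_inv_cancel₀ ha, one_mul] at this

lemma aux_T_ratio (hT : T ≠ 0) (a b : FL) (ha : a ≠ 0)
    (h : ∀ t, T (a * t) = 0 → T (b * t) = 0) :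
    ∃ l : Fq, b = algebraMap Fq FL l * a := by
  have hf : T.comp (LinearMap.mulLeft Fq a) ≠ 0 := by
    intro h0
    exact ha (aux_T_zero T hT a fun t => congrFun (congrArg DFunLike.coe h0) t)
  obtain ⟨l, hl⟩ := aux_funct_ker (T.comp (LinearMap.mulLeft Fq a))
    (T.comp (LinearMap.mulLeft Fq b)) hf (fun m hm => h m hm)
  refine ⟨l, ?_⟩
  have key : ∀ t, T ((b - algebraMap Fq FL l * a) * t) = 0 := by
    intro t
    have := congrFun (congrArg DFunLike.coe hl) t
    simp only [LinearMap.comp_apply, LinearMap.mulLeft_apply, LinearMap.smul_apply,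
      smul_eq_mul] at this
    rw [sub_mul, map_sub, this, mul_assoc, ← Algebra.smul_def, map_smul, smul_eq_mul, sub_self]
  have := aux_T_zero T hT _ key
  rw [sub_eq_zero] at this
  exact this

/-- Every functional `FL → Fq` is `t ↦ T (a * t)` for some `a`. -/
lemma aux_T_surj (hT : T ≠ 0) (φ : FL →ₗ[Fq] Fq) :
    ∃ a : FL, φ = T.comp (LinearMap.mulLeft Fq a) := by
  let Φ : FL →ₗ[Fq] (FL →ₗ[Fq] Fq) :=
    { toFun := fun a => T.comp (LinearMap.mulLeft Fq a)
      map_add' := by intro a b; ext t; simp [add_mul]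
      map_smul' := by intro c a; ext t; simp [Algebra.smul_def, mul_assoc, ← Algebra.smul_def] }
  have hinj : Function.Injective Φ := by
    rw [← LinearMap.ker_eq_bot, Submodule.eq_bot_iff]
    intro a ha
    exact aux_T_zero T hT a fun t => congrFun (congrArg DFunLike.coe ha) t
  have hsurj : Function.Surjective Φ := by
    have h1 : LinearMap.ker Φ = ⊥ := LinearMap.ker_eq_bot.mpr hinj
    have h2 := LinearMap.finrank_range_add_finrank_ker Φ
    rw [h1, finrank_bot, add_zero] at h2
    have h3 : finrank Fq (FL →ₗ[Fq] Fq) = finrank Fq FL :=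
      Subspace.dual_finrank_eq
    rw [← LinearMap.range_eq_top]
    apply Submodule.eq_top_of_finrank_eq
    rw [h2, h3]
  obtain ⟨a, ha⟩ := hsurj φ
  exact ⟨a, ha.symm⟩

end T

section Hyp
variable {k M : Type*} [Field k] [AddCommGroup M] [Module k M] [FiniteDimensional k M]

lemma aux_ker_finrank (φ : M →ₗ[k] k) (hφ : φ ≠ 0) :
    finrank k (LinearMap.ker φ) = finrank k M - 1 := by
  obtain ⟨u, hu⟩ : ∃ u, φ u ≠ 0 := by
    by_contra h'; push_neg at h'; exact hφ (LinearMap.ext fun m => h' m)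
  have hr : LinearMap.range φ = ⊤ := by
    rw [LinearMap.range_eq_top]
    intro a
    exact ⟨(a / φ u) • u, by rw [map_smul, smul_eq_mul, div_mul_cancel₀ _ hu]⟩
  have h2 := LinearMap.finrank_range_add_finrank_ker φ
  rw [hr, finrank_top, finrank_self] at h2
  omega

lemma aux_hyperplane_ker (H : Submodule k M) (hH : finrank k H = finrank k M - 1)
    (hM : 1 ≤ finrank k M) :
    ∃ φ : M →ₗ[k] k, φ ≠ 0 ∧ LinearMap.ker φ = H := by
  have hq : finrank k (M ⧸ H) = 1 := by
    have := Submodule.finrank_quotient_add_finrank H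
    have hle : finrank k H ≤ finrank k M := Submodule.finrank_le H
    omega
  let e : (M ⧸ H) ≃ₗ[k] k := LinearEquiv.ofFinrankEq _ _ (by rw [hq, finrank_self])
  refine ⟨e.toLinearMap.comp H.mkQ, ?_, ?_⟩
  · intro h0
    have hker : LinearMap.ker (e.toLinearMap.comp H.mkQ) = H := by
      rw [LinearMap.ker_comp, LinearEquiv.ker, Submodule.comap_bot, Submodule.ker_mkQ]
    rw [h0, LinearMap.ker_zero] at hker
    have : finrank k H = finrank k M := by rw [← hker]; exact finrank_top k M
    omega
  · rw [LinearMap.ker_comp, LinearEquiv.ker, Submodule.comap_bot, Submodule.ker_mkQ]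

/-- separating functional vanishing on a subspace -/
lemma aux_sep (W : Submodule k M) (u : M) (hu : u ∉ W) :
    ∃ ψ : M →ₗ[k] k, ψ u ≠ 0 ∧ ∀ w ∈ W, ψ w = 0 := by
  have h0 : W.mkQ u ≠ 0 := by
    intro h; exact hu ((Submodule.Quotient.mk_eq_zero W).mp h)
  obtain ⟨g, hg⟩ : ∃ g : Module.Dual k (M ⧸ W), g (W.mkQ u) ≠ 0 := by
    by_contra h'; push_neg at h'
    exact h0 ((Module.forall_dual_apply_eq_zero_iff k _).mp h')
  exact ⟨g.comp W.mkQ, hg, fun w hw => by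
    simp [Submodule.mkQ_apply, (Submodule.Quotient.mk_eq_zero W).mpr hw]⟩

end Hyp

section V
variable {Fq FL : Type*} [Field Fq] [Field FL] [Algebra Fq FL] [FiniteDimensional Fq FL]
variable {K : ℕ}

lemma aux_sum_single {FL : Type*} [Field FL] {K : ℕ} (x : Fin K → FL) (j : Fin K) (t : FL) :
    ∑ k, x k * (Pi.single j t : Fin K → FL) k = x j * t := by
  rw [Finset.sum_eq_single j]
  · simp
  · intro b _ hb; simp [Pi.single_eq_of_ne hb]
  · simp

/-- `u ↦ ∑ j, x j * u j` as an `Fq`-linear map. -/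
def auxBil (Fq : Type*) [Field Fq] {FL : Type*} [Field FL] [Algebra Fq FL] {K : ℕ}
    (x : Fin K → FL) : (Fin K → FL) →ₗ[Fq] FL where
  toFun u := ∑ j, x j * u j
  map_add' u w := by simp [mul_add, Finset.sum_add_distrib]
  map_smul' a u := by
    simp only [Pi.smul_apply, RingHom.id_apply, Finset.smul_sum]
    congr 1; ext j; rw [mul_smul_comm]

@[simp] lemma auxBil_apply (x u : Fin K → FL) : (auxBil Fq x) u = ∑ j, x j * u j := rfl

lemma auxBil_single (x : Fin K → FL) (j : Fin K) (t : FL) :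
    (auxBil Fq x) (Pi.single j t) = x j * t := by
  simp only [auxBil_apply]; exact aux_sum_single x j t

lemma auxBil_smul_right (x u : Fin K → FL) (a : FL) :
    (auxBil Fq x) (a • u) = a * (auxBil Fq x) u := by
  simp only [auxBil_apply, Pi.smul_apply, smul_eq_mul, Finset.mul_sum]
  congr 1; ext j; ring

lemma auxBil_smul_left (x u : Fin K → FL) (a : FL) :
    (auxBil Fq (a • x)) u = a * (auxBil Fq x) u := by
  simp only [auxBil_apply, Pi.smul_apply, smul_eq_mul, Finset.mul_sum]
  congr 1; ext j; ring

lemma auxBil_sub_left (x y u : Fin K → FL) :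
    (auxBil Fq (x - y)) u = (auxBil Fq x) u - (auxBil Fq y) u := by
  simp only [auxBil_apply, Pi.sub_apply, sub_mul, Finset.sum_sub_distrib]

/-- Every `Fq`-functional on `Fin K → FL` is `u ↦ T (∑ x j * u j)`. -/
lemma aux_V_surj (T : FL →ₗ[Fq] Fq) (hT : T ≠ 0) (φ : (Fin K → FL) →ₗ[Fq] Fq) :
    ∃ x : Fin K → FL, φ = T.comp (auxBil Fq x) := by
  have hx : ∀ j : Fin K, ∃ a : FL,
      φ.comp (LinearMap.single Fq (fun _ : Fin K => FL) j) = T.comp (LinearMap.mulLeft Fq a) :=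
    fun j => aux_T_surj T hT _
  choose x hxx using hx
  refine ⟨x, LinearMap.ext fun u => ?_⟩
  have hu : u = ∑ j, Pi.single j (u j) := (Finset.univ_sum_single u).symm
  conv_lhs => rw [hu]
  rw [map_sum]
  have : ∀ j, φ (Pi.single j (u j)) = T (x j * u j) := by
    intro j
    have := congrFun (congrArg DFunLike.coe (hxx j)) (u j)
    simpa using this
  simp_rw [this]
  rw [LinearMap.comp_apply, auxBil_apply, map_sum]

/-- Nonzero `x` gives a nonzero functional. -/
lemma aux_V_ne_zero (T : FL →ₗ[Fq] Fq) (hT : T ≠ 0) (x : Fin K → FL) (hx : x ≠ 0) :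
    T.comp (auxBil Fq x) ≠ 0 := by
  obtain ⟨j, hj⟩ : ∃ j, x j ≠ 0 := by
    by_contra h'; push_neg at h'; exact hx (funext h')
  intro h0
  apply hj
  apply aux_T_zero T hT
  intro t
  have := congrFun (congrArg DFunLike.coe h0) (Pi.single j t)
  rwa [LinearMap.comp_apply, auxBil_single] at this

/-- Injectivity: if `T (∑ x j * u j) = 0` for all `u` then `x = 0`. -/
lemma aux_V_inj (T : FL →ₗ[Fq] Fq) (hT : T ≠ 0) (x : Fin K → FL)
    (h : T.comp (auxBil Fq x) = 0) : x = 0 := by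
  by_contra hx
  exact aux_V_ne_zero T hT x hx h

end V

/-- A nondegenerate `[N,K]_{q^h}` code (with generator matrix columns `v i`) has all of its
nonzero codewords `q`-outer minimal if and only if the union of the one-dimensional
`F_{q^h}`-subspaces spanned by the `v i` is an `F_q`-vectorial strong blocking set. -/
theorem stmt_1 (q h K N : ℕ) (hq : IsPrimePow q) (hh : 1 ≤ h) (hK : 1 ≤ K)
    (Fq FL : Type) [Field Fq] [Field FL] [Algebra Fq FL] [Fintype Fq] [Fintype FL]
    (hcard_q : Fintype.card Fq = q) (hcard_L : Fintype.card FL = q ^ h)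
    (v : Fin N → (Fin K → FL)) (hv : ∀ i, v i ≠ 0)
    (hspan : Submodule.span FL (Set.range v) = ⊤)
    (C : Set (Fin N → FL))
    (hC : C = {c | ∃ x : Fin K → FL, c = fun i => ∑ j, x j * v i j}) :
    (∀ c ∈ C, c ≠ 0 → ∀ c' ∈ C,
        (∀ i, c' i ≠ 0 → c i ≠ 0) →
        (∀ i, c i ≠ 0 → ∃ l : Fq, c' i = algebraMap Fq FL l * c i) →
        ∃ l : Fq, c' = algebraMap Fq FL l • c)
      ↔
    (∀ H : Submodule Fq (Fin K → FL), Module.finrank Fq H = K * h - 1 →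
      Submodule.span Fq ((⋃ i, (Submodule.span FL {v i} : Set (Fin K → FL)))
        ∩ (H : Set (Fin K → FL))) = H) := by
  classical
  subst hC
  -- basic finrank facts
  have hq2 : 2 ≤ q := hq.two_le
  have hfr : finrank Fq FL = h := by
    have hc : Fintype.card FL = Fintype.card Fq ^ finrank Fq FL :=
      (Module.card_fintype (finBasis Fq FL)).trans (by simp)
    rw [hcard_q, hcard_L] at hc
    exact (Nat.pow_right_injective hq2 hc.symm)
  have hVfr : finrank Fq (Fin K → FL) = K * h := by
    rw [Module.finrank_pi_fintype]
    simp [hfr, Finset.sum_const, mul_comm]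
  -- a nonzero functional T : FL → Fq
  obtain ⟨T, hT⟩ : ∃ T : FL →ₗ[Fq] Fq, T ≠ 0 := by
    have hpos : 0 < finrank Fq FL := by rw [hfr]; omega
    let b := finBasis Fq FL
    refine ⟨b.coord ⟨0, hpos⟩, fun h0 => ?_⟩
    have := congrFun (congrArg DFunLike.coe h0) (b ⟨0, hpos⟩)
    rw [Basis.coord_apply, Basis.repr_self] at this
    simpa using this
  -- nondegeneracy
  have hnd : ∀ x : Fin K → FL, (∀ i, ∑ j, x j * v i j = 0) → x = 0 := by
    intro x hx
    let ℓ : (Fin K → FL) →ₗ[FL] FL :=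
      { toFun := fun u => ∑ j, x j * u j
        map_add' := fun u w => by simp [mul_add, Finset.sum_add_distrib]
        map_smul' := fun a u => by
          simp only [Pi.smul_apply, smul_eq_mul, RingHom.id_apply, Finset.mul_sum]
          congr 1; ext j; ring }
    have hker : ∀ u, ℓ u = 0 := by
      intro u
      have hle : (⊤ : Submodule FL (Fin K → FL)) ≤ LinearMap.ker ℓ := by
        rw [← hspan]
        apply Submodule.span_le.mpr
        rintro _ ⟨i, rfl⟩
        exact LinearMap.mem_ker.mpr (hx i)
      exact LinearMap.mem_ker.mp (hle trivial)
    funext j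
    have h2 := hker (Pi.single j 1)
    have h3 : ℓ (Pi.single j 1) = ∑ k, x k * (Pi.single j 1 : Fin K → FL) k := rfl
    rw [h3, aux_sum_single, mul_one] at h2
    exact h2
  constructor
  · -- minimality ⟹ strong blocking
    intro hmin H hHfr
    obtain ⟨φ, hφ0, hφker⟩ := aux_hyperplane_ker H (by rw [hVfr, ← hHfr]) (by rw [hVfr]; nlinarith)
    obtain ⟨x, hφeq⟩ := aux_V_surj T hT φ
    have hx0 : x ≠ 0 := by
      rintro rfl
      apply hφ0
      rw [hφeq]
      ext u
      simp
    set S : Set (Fin K → FL) :=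
      (⋃ i, (Submodule.span FL {v i} : Set (Fin K → FL))) ∩ (H : Set (Fin K → FL)) with hS
    by_contra hne
    have hWle : Submodule.span Fq S ≤ H := Submodule.span_le.mpr Set.inter_subset_right
    have hnle : ¬ (H ≤ Submodule.span Fq S) := fun hle => hne (le_antisymm hWle hle)
    obtain ⟨u, huH, huW⟩ := SetLike.not_le_iff_exists.mp hnle
    obtain ⟨ψ, hψu, hψW⟩ := aux_sep (Submodule.span Fq S) u huW
    obtain ⟨y, hψeq⟩ := aux_V_surj T hT ψ
    -- key: vectors on the lines inside H lie in span S, hence killed by ψ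
    have hlineW : ∀ (i : Fin N) (a : FL), a • v i ∈ H → ψ (a • v i) = 0 := by
      intro i a hmem
      apply hψW
      apply Submodule.subset_span
      refine ⟨Set.mem_iUnion.mpr ⟨i, ?_⟩, hmem⟩
      exact Submodule.mem_span_singleton.mpr ⟨a, rfl⟩
    have hmemH : ∀ w, w ∈ H ↔ T ((auxBil Fq x) w) = 0 := by
      intro w
      rw [← hφker, LinearMap.mem_ker, hφeq, LinearMap.comp_apply]
    -- apply minimality
    have hcmem : (fun i => ∑ j, x j * v i j) ∈
        {c : Fin N → FL | ∃ x' : Fin K → FL, c = fun i => ∑ j, x' j * v i j} := ⟨x, rfl⟩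
    have hcmem' : (fun i => ∑ j, y j * v i j) ∈
        {c : Fin N → FL | ∃ x' : Fin K → FL, c = fun i => ∑ j, x' j * v i j} := ⟨y, rfl⟩
    have hc0 : (fun i => ∑ j, x j * v i j) ≠ 0 := by
      intro h0
      exact hx0 (hnd x fun i => congrFun h0 i)
    have hsupp : ∀ i, (∑ j, y j * v i j) ≠ 0 → (∑ j, x j * v i j) ≠ 0 := by
      intro i hyi hxi
      apply hyi
      apply aux_T_zero T hT
      intro t
      have hmem : t • v i ∈ H := by
        rw [hmemH, auxBil_smul_right, auxBil_apply, hxi, mul_zero, map_zero]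
      have := hlineW i t hmem
      rw [hψeq, LinearMap.comp_apply, auxBil_smul_right, auxBil_apply] at this
      rwa [mul_comm]
    have hratio : ∀ i, (∑ j, x j * v i j) ≠ 0 →
        ∃ l : Fq, (∑ j, y j * v i j) = algebraMap Fq FL l * (∑ j, x j * v i j) := by
      intro i hxi
      apply aux_T_ratio T hT _ _ hxi
      intro t ht
      have hmem : t • v i ∈ H := by
        rw [hmemH, auxBil_smul_right, auxBil_apply, mul_comm]
        exact ht
      have := hlineW i t hmem
      rw [hψeq, LinearMap.comp_apply, auxBil_smul_right, auxBil_apply] at this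
      rwa [mul_comm]
    obtain ⟨l, hl⟩ := hmin _ hcmem hc0 _ hcmem' hsupp hratio
    -- deduce y = (algebraMap l) • x
    have hyx : y = algebraMap Fq FL l • x := by
      apply eq_of_sub_eq_zero
      apply hnd
      intro i
      have h1 := congrFun hl i
      simp only [Pi.smul_apply, smul_eq_mul] at h1
      calc ∑ j, (y - algebraMap Fq FL l • x) j * v i j
          = (∑ j, y j * v i j) - algebraMap Fq FL l * ∑ j, x j * v i j := by
            rw [Finset.mul_sum, ← Finset.sum_sub_distrib]
            congr 1; ext j; simp [sub_mul, mul_assoc, Algebra.smul_def]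
        _ = 0 := by rw [h1, sub_self]
    -- contradiction with ψ u ≠ 0
    apply hψu
    rw [hψeq, LinearMap.comp_apply, hyx, auxBil_smul_left, ← Algebra.smul_def, map_smul]
    rw [(hmemH u).mp huH, smul_zero]
  · -- strong blocking ⟹ minimality
    intro hblock c hc hc0 c' hc' hsupp0 hratio0
    obtain ⟨x, rfl⟩ := hc
    obtain ⟨y, rfl⟩ := hc'
    have hsupp : ∀ i, (∑ j, y j * v i j) ≠ 0 → (∑ j, x j * v i j) ≠ 0 := hsupp0
    have hratio : ∀ i, (∑ j, x j * v i j) ≠ 0 →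
        ∃ l : Fq, (∑ j, y j * v i j) = algebraMap Fq FL l * (∑ j, x j * v i j) := hratio0
    have hx0 : x ≠ 0 := by
      rintro rfl
      apply hc0
      ext i; simp
    set φ := T.comp (auxBil Fq x) with hφdef
    have hφ0 : φ ≠ 0 := aux_V_ne_zero T hT x hx0
    have hHfr : finrank Fq (LinearMap.ker φ) = K * h - 1 := by
      rw [aux_ker_finrank φ hφ0, hVfr]
    have hspanS := hblock (LinearMap.ker φ) hHfr
    set ψ := T.comp (auxBil Fq y) with hψdef
    -- every element of S is killed by ψ
    have hSψ : ∀ s ∈ (⋃ i, (Submodule.span FL {v i} : Set (Fin K → FL))) ∩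
        ((LinearMap.ker φ : Submodule Fq (Fin K → FL)) : Set (Fin K → FL)), ψ s = 0 := by
      rintro s ⟨hs1, hs2⟩
      obtain ⟨i, hsi⟩ := Set.mem_iUnion.mp hs1
      obtain ⟨a, rfl⟩ := Submodule.mem_span_singleton.mp hsi
      have hφs : T (a * ∑ j, x j * v i j) = 0 := by
        have := (SetLike.mem_coe.mp hs2)
        rw [LinearMap.mem_ker, hφdef, LinearMap.comp_apply, auxBil_smul_right,
          auxBil_apply] at this
        exact this
      by_cases hci : (∑ j, x j * v i j) = 0
      · have hci' : (∑ j, y j * v i j) = 0 := by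
          by_contra hne
          exact (hsupp i hne) hci
        rw [hψdef, LinearMap.comp_apply, auxBil_smul_right, auxBil_apply, hci', mul_zero,
          map_zero]
      · obtain ⟨l, hl⟩ := hratio i hci
        rw [hψdef, LinearMap.comp_apply, auxBil_smul_right, auxBil_apply, hl,
          mul_left_comm, ← Algebra.smul_def, map_smul, hφs, smul_zero]
    by_cases hψ0 : ψ = 0
    · refine ⟨0, ?_⟩
      have hy0 : y = 0 := aux_V_inj T hT y hψ0
      subst hy0
      ext i; simp
    · -- ker φ ≤ ker ψ, hence equal, hence ψ = l • φ
      have hle : LinearMap.ker φ ≤ LinearMap.ker ψ := by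
        rw [← hspanS]
        apply Submodule.span_le.mpr
        intro s hs
        exact LinearMap.mem_ker.mpr (hSψ s hs)
      have hker : ∀ m, φ m = 0 → ψ m = 0 := fun m hm =>
        LinearMap.mem_ker.mp (hle (LinearMap.mem_ker.mpr hm))
      obtain ⟨l, hl⟩ := aux_funct_ker φ ψ hφ0 hker
      refine ⟨l, ?_⟩
      have hyx : y = algebraMap Fq FL l • x := by
        apply eq_of_sub_eq_zero
        apply aux_V_inj T hT
        refine LinearMap.ext fun u => ?_
        have h1 := congrFun (congrArg DFunLike.coe hl) u
        simp only [LinearMap.smul_apply, smul_eq_mul] at h1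
        have h2 : (auxBil Fq (y - algebraMap Fq FL l • x)) u
            = (auxBil Fq y) u - algebraMap Fq FL l * (auxBil Fq x) u := by
          rw [auxBil_sub_left, auxBil_smul_left]
        simp only [LinearMap.comp_apply, LinearMap.zero_apply, h2, map_sub]
        rw [← Algebra.smul_def, map_smul, smul_eq_mul]
        rw [hψdef, LinearMap.comp_apply] at h1
        rw [hφdef] at h1
        simp only [LinearMap.comp_apply] at h1
        rw [h1, sub_self]
      ext i
      simp only [Pi.smul_apply, smul_eq_mul]
      rw [hyx]
      rw [Finset.mul_sum]
      congr 1; ext j; simp [mul_assoc]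
  done
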